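/- Let {F_n}_{n∈ℕ} be a sequence of families of axis-parallel boxes in ℝ^d and 0 ≤ k < d. Suppose no F_n can be pierced by finitely many axis-parallel k-flats. Then there exist a strictly increasing sequence n₁ < n₂ < ⋯ of natural numbers and boxes B_m ∈ F_{n_m} such that no axis-parallel k-flat intersects two distinct boxes B_m, B_{m'}. -/

import Mathlib

open Set

/-- An axis-parallel box in `ℝ^d`: a product of closed bounded intervals. -/
def IsBox {d : ℕ} (B : Set (Fin d → ℝ)) : Prop :=
  ∃ a b : Fin d → ℝ, (∀ i, a i ≤ b i) ∧ B = {x | ∀ i, x i ∈ Set.Icc (a i) (b i)}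

/-- An axis-parallel `k`-flat in `ℝ^d`: coordinates in a set `I` of size `d - k` are fixed. -/
def IsAxisFlat {d : ℕ} (k : ℕ) (K : Set (Fin d → ℝ)) : Prop :=
  ∃ (I : Finset (Fin d)) (c : Fin d → ℝ), I.card = d - k ∧ K = {x | ∀ i ∈ I, x i = c i}

/-- An axis-parallel hyperplane in `ℝ^d`. -/
def IsAxisHyperplane {d : ℕ} (H : Set (Fin d → ℝ)) : Prop :=
  ∃ (i : Fin d) (c : ℝ), H = {x | x i = c}

/-- `F` is pierceable by finitely many axis-parallel `k`-flats. -/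
def PiercedByFlats {d : ℕ} (k : ℕ) (F : Set (Set (Fin d → ℝ))) : Prop :=
  ∃ K : Finset (Set (Fin d → ℝ)), (∀ f ∈ K, IsAxisFlat k f) ∧
    ∀ B ∈ F, ∃ f ∈ K, (B ∩ f).Nonempty

/-- `F` is pierceable by finitely many axis-parallel hyperplanes. -/
def PiercedByHyperplanes {d : ℕ} (F : Set (Set (Fin d → ℝ))) : Prop :=
  ∃ H : Finset (Set (Fin d → ℝ)), (∀ h ∈ H, IsAxisHyperplane h) ∧
    ∀ B ∈ F, ∃ h ∈ H, (B ∩ h).Nonempty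

namespace StmtAux

variable {d : ℕ}

abbrev Bx (d : ℕ) := (Fin d → ℝ) × (Fin d → ℝ)

/-- intervals at coordinate `i` overlap -/
def ivO (p q : Bx d) (i : Fin d) : Prop := p.1 i ≤ q.2 i ∧ q.1 i ≤ p.2 i

lemma ivO_symm {p q : Bx d} {i} (h : ivO p q i) : ivO q p i := ⟨h.2, h.1⟩

/-- linked over coordinate set C -/
def lkd (C : Finset (Fin d)) (p q : Bx d) : Prop := ∃ i ∈ C, ivO p q i

lemma lkd_symm {C} {p q : Bx d} (h : lkd C p q) : lkd C q p := by
  obtain ⟨i, hi, h⟩ := h; exact ⟨i, hi, ivO_symm h⟩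

/-- finitely pierceable by axis hyperplanes with axes in C -/
def fp (C : Finset (Fin d)) (F : Set (Bx d)) : Prop :=
  ∃ H : Finset (Fin d × ℝ), (∀ h ∈ H, h.1 ∈ C) ∧
    ∀ p ∈ F, ∃ h ∈ H, p.1 h.1 ≤ h.2 ∧ h.2 ≤ p.2 h.1

lemma fp_mono {C} {F F' : Set (Bx d)} (hs : F' ⊆ F) (h : fp C F) : fp C F' := by
  obtain ⟨H, hH, hp⟩ := h; exact ⟨H, hH, fun p hp' => hp p (hs hp')⟩

lemma fp_empty (C : Finset (Fin d)) : fp C (∅ : Set (Bx d)) :=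
  ⟨∅, by simp, by simp⟩

lemma fp_union {C} {F F' : Set (Bx d)} (h : fp C F) (h' : fp C F') : fp C (F ∪ F') := by
  obtain ⟨H, hH, hp⟩ := h; obtain ⟨H', hH', hp'⟩ := h'
  refine ⟨H ∪ H', ?_, ?_⟩
  · intro x hx; rcases Finset.mem_union.1 hx with hx | hx
    · exact hH x hx
    · exact hH' x hx
  · rintro p (hp1 | hp1)
    · obtain ⟨x, hx, hx2⟩ := hp p hp1; exact ⟨x, Finset.mem_union_left _ hx, hx2⟩
    · obtain ⟨x, hx, hx2⟩ := hp' p hp1; exact ⟨x, Finset.mem_union_right _ hx, hx2⟩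

lemma fp_pin {C : Finset (Fin d)} {z} (hz : z ∈ C) (x : ℝ) :
    fp C {p : Bx d | p.1 z ≤ x ∧ x ≤ p.2 z} := by
  refine ⟨{(z, x)}, by simpa using hz, ?_⟩
  rintro p ⟨h1, h2⟩; exact ⟨(z, x), Finset.mem_singleton_self _, h1, h2⟩

lemma fp_iUnion {ι : Type} [Fintype ι] {C} (S : ι → Set (Bx d)) (h : ∀ t, fp C (S t)) :
    fp C (⋃ t, S t) := by
  classical
  choose H hH hp using h
  refine ⟨Finset.univ.biUnion H, ?_, ?_⟩
  · intro x hx; obtain ⟨t, _, hx⟩ := Finset.mem_biUnion.1 hx; exact hH t x hx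
  · intro p hp'
    obtain ⟨t, hpt⟩ := Set.mem_iUnion.1 hp'
    obtain ⟨x, hx, hx2⟩ := hp t p hpt
    exact ⟨x, Finset.mem_biUnion.2 ⟨t, Finset.mem_univ _, hx⟩, hx2⟩

/-- Lemma 1: a configuration of `C.card + 1` pairwise strongly disjoint boxes cannot
all "kill" a non-pierceable family. -/
lemma one {C : Finset (Fin d)} (J : Fin (C.card + 1) → Bx d)
    (hJ : ∀ t t', t ≠ t' → ¬ lkd C (J t) (J t'))
    (F : Set (Bx d)) (hF : ¬ fp C F) :
    ∃ t, ¬ fp C {p ∈ F | ¬ lkd C p (J t)} := by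
  classical
  by_contra hcon
  push_neg at hcon
  apply hF
  have hcore : fp C {p ∈ F | ∀ t, lkd C p (J t)} := by
    refine ⟨(Finset.univ ×ˢ C).image
      (fun ti : Fin (C.card + 1) × Fin d => (ti.2, (J ti.1).2 ti.2)), ?_, ?_⟩
    · intro h hh
      obtain ⟨ti, hti, rfl⟩ := Finset.mem_image.1 hh
      exact (Finset.mem_product.1 hti).2
    · rintro p ⟨hpF, hall⟩
      have hchoice : ∀ t : Fin (C.card + 1), ∃ i, i ∈ C ∧ ivO p (J t) i := by
        intro t; obtain ⟨i, hi, h⟩ := hall t; exact ⟨i, hi, h⟩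
      choose g hgC hgO using hchoice
      have hmaps : ∀ t : Fin (C.card + 1), t ∈ Finset.univ → g t ∈ C := fun t _ => hgC t
      have hcard : C.card < (Finset.univ : Finset (Fin (C.card + 1))).card := by simp
      obtain ⟨t, _, t', _, htt', heq⟩ :=
        Finset.exists_ne_map_eq_of_card_lt_of_maps_to hcard hmaps
      have h1 : ivO p (J t) (g t) := hgO t
      have h2 : ivO p (J t') (g t) := by rw [heq]; exact hgO t'
      have hd := hJ t t' htt'
      have hno : ¬ ivO (J t) (J t') (g t) := fun hov => hd ⟨g t, hgC t, hov⟩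
      rw [ivO] at hno; push_neg at hno
      rcases le_or_gt ((J t).1 (g t)) ((J t').2 (g t)) with hcase | hcase
      · have hgt := hno hcase
        refine ⟨(g t, (J t).2 (g t)), ?_, h1.1, le_trans (le_of_lt hgt) h2.2⟩
        exact Finset.mem_image.2 ⟨(t, g t), Finset.mem_product.2 ⟨Finset.mem_univ _, hgC t⟩, rfl⟩
      · refine ⟨(g t, (J t').2 (g t)), ?_, h2.1, le_trans (le_of_lt hcase) h1.2⟩
        exact Finset.mem_image.2 ⟨(t', g t), Finset.mem_product.2 ⟨Finset.mem_univ _, hgC t⟩, rfl⟩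
  have hsub : F ⊆ (⋃ t, {p ∈ F | ¬ lkd C p (J t)}) ∪ {p ∈ F | ∀ t, lkd C p (J t)} := by
    intro p hp
    by_cases h : ∀ t, lkd C p (J t)
    · exact Or.inr ⟨hp, h⟩
    · push_neg at h; obtain ⟨t, ht⟩ := h
      exact Or.inl (Set.mem_iUnion.2 ⟨t, hp, ht⟩)
  exact fp_mono hsub (fp_union (fp_iUnion _ hcon) hcore)

/-- Concentration lemma: a non-pierceable family has a nested sequence of non-pierceable
subfamilies whose `z`-intervals eventually separate from any fixed member. -/
lemma conc {C : Finset (Fin d)} {z : Fin d} (hz : z ∈ C)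
    (G : Set (Bx d)) (hG : ¬ fp C G) :
    ∃ V : ℕ → Set (Bx d),
      (∀ m m', m ≤ m' → V m' ⊆ V m) ∧ (∀ m, V m ⊆ G) ∧ (∀ m, ¬ fp C (V m)) ∧
      (∀ m p, p ∈ V m → ∃ m', ∀ m'', m' ≤ m'' → ∀ q ∈ V m'', ¬ ivO p q z) := by
  classical
  set Gio : ℝ → Set (Bx d) := fun x => {p ∈ G | p.2 z < x} with hGio
  set Goi : ℝ → Set (Bx d) := fun x => {p ∈ G | x < p.1 z} with hGoi
  have tri : ∀ (x : ℝ) (p : Bx d), p ∈ G →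
      p ∈ Gio x ∨ (p.1 z ≤ x ∧ x ≤ p.2 z) ∨ p ∈ Goi x := by
    intro x p hp
    rcases lt_or_ge (p.2 z) x with h | h
    · exact Or.inl ⟨hp, h⟩
    rcases lt_or_ge x (p.1 z) with h2 | h2
    · exact Or.inr (Or.inr ⟨hp, h2⟩)
    · exact Or.inr (Or.inl ⟨h2, h⟩)
  have decompose : ∀ x : ℝ, fp C (Gio x) → fp C (Goi x) → False := by
    intro x h1 h2
    apply hG
    have hsub : G ⊆ Gio x ∪ ({p : Bx d | p.1 z ≤ x ∧ x ≤ p.2 z} ∪ Goi x) := by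
      intro p hp
      rcases tri x p hp with h | h | h
      · exact Or.inl h
      · exact Or.inr (Or.inl h)
      · exact Or.inr (Or.inr h)
    exact fp_mono hsub (fp_union h1 (fp_union (fp_pin hz x) h2))
  by_cases hcase1 : ∀ x : ℝ, fp C (Gio x)
  · -- concentration at +∞
    refine ⟨fun m => Goi m, ?_, fun m => Set.sep_subset _ _, ?_, ?_⟩
    · intro m m' hmm p hp
      exact ⟨hp.1, lt_of_le_of_lt (by exact_mod_cast Nat.cast_le.2 hmm) hp.2⟩
    · intro m hfp; exact decompose m (hcase1 m) hfp
    · intro m p hp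
      obtain ⟨m', hm'⟩ := exists_nat_gt (p.2 z)
      refine ⟨m', fun m'' hm'' q hq hiv => ?_⟩
      have : (m' : ℝ) ≤ m'' := by exact_mod_cast hm''
      have : p.2 z < q.1 z := lt_of_lt_of_le hm' (le_trans this (le_of_lt hq.2))
      exact absurd hiv.2 (not_le.2 this)
  · push_neg at hcase1
    by_cases hcase2 : ∀ x : ℝ, ¬ fp C (Gio x)
    · -- concentration at -∞
      refine ⟨fun m => Gio (-(m : ℝ)), ?_, fun m => Set.sep_subset _ _, ?_, ?_⟩
      · intro m m' hmm p hp
        refine ⟨hp.1, lt_of_lt_of_le hp.2 ?_⟩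
        have : (m : ℝ) ≤ m' := by exact_mod_cast hmm
        linarith
      · intro m; exact hcase2 _
      · intro m p hp
        obtain ⟨m', hm'⟩ := exists_nat_gt (-(p.1 z))
        refine ⟨m', fun m'' hm'' q hq hiv => ?_⟩
        have h1 : (m' : ℝ) ≤ m'' := by exact_mod_cast hm''
        have : q.2 z < p.1 z := by
          have := hq.2; linarith
        exact absurd hiv.1 (not_le.2 this)
    · push_neg at hcase2
      -- the sup of x with fp (Gio x)
      set X : Set ℝ := {x | fp C (Gio x)} with hX
      have hXne : X.Nonempty := hcase2
      obtain ⟨x₁, hx₁⟩ := hcase1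
      have hXdown : ∀ x y : ℝ, x ≤ y → y ∈ X → x ∈ X := by
        intro x y hxy hy
        have hsub : Gio x ⊆ Gio y := fun p hp => ⟨hp.1, lt_of_lt_of_le hp.2 hxy⟩
        exact fp_mono hsub hy
      have hXbdd : BddAbove X := by
        refine ⟨x₁, fun y hy => ?_⟩
        by_contra hlt; push_neg at hlt
        exact hx₁ (hXdown x₁ y (le_of_lt hlt) hy)
      set α := sSup X with halpha
      have hmemX : ∀ x : ℝ, x < α → x ∈ X := by
        intro x hx
        obtain ⟨y, hy, hxy⟩ := exists_lt_of_lt_csSup hXne hx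
        exact hXdown x y (le_of_lt hxy) hy
      have hnotX : ∀ x : ℝ, α < x → ¬ fp C (Gio x) := by
        intro x hx hfp
        exact absurd (le_csSup hXbdd hfp) (not_le.2 hx)
      set Gbt : ℝ → Set (Bx d) := fun ε => {p ∈ G | α < p.1 z ∧ p.2 z < α + ε} with hGbt
      set GbtL : ℝ → Set (Bx d) := fun ε => {p ∈ G | α - ε < p.1 z ∧ p.2 z < α} with hGbtL
      by_cases hcase3 : ∀ ε : ℝ, 0 < ε → ¬ fp C (Gbt ε)
      · -- concentration at α from the right
        refine ⟨fun m => Gbt (1 / (m + 1)), ?_, fun m => Set.sep_subset _ _, ?_, ?_⟩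
        · intro m m' hmm p hp
          refine ⟨hp.1, hp.2.1, lt_of_lt_of_le hp.2.2 ?_⟩
          have : (1 : ℝ) / (m' + 1) ≤ 1 / (m + 1) := by
            apply one_div_le_one_div_of_le
            · positivity
            · have : (m : ℝ) ≤ m' := by exact_mod_cast hmm
              linarith
          linarith
        · intro m; exact hcase3 _ (by positivity)
        · intro m p hp
          obtain ⟨m', hm'⟩ := exists_nat_one_div_lt (show (0:ℝ) < p.1 z - α by linarith [hp.2.1])
          refine ⟨m', fun m'' hm'' q hq hiv => ?_⟩
          have h1 : (1 : ℝ) / (m'' + 1) ≤ 1 / (m' + 1) := by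
            apply one_div_le_one_div_of_le
            · positivity
            · have : (m' : ℝ) ≤ m'' := by exact_mod_cast hm''
              linarith
          have : q.2 z < p.1 z := by
            have := hq.2.2; linarith
          exact absurd hiv.1 (not_le.2 this)
      · push_neg at hcase3
        obtain ⟨ε₀, hε₀, hfpε₀⟩ := hcase3
        -- key: every left window is non-pierceable
        have key : ∀ ε : ℝ, 0 < ε → ¬ fp C (GbtL ε) := by
          intro ε hε hfpL
          apply hnotX (α + ε₀) (by linarith)
          have hsub : Gio (α + ε₀) ⊆
              Gio (α - ε) ∪ ({p : Bx d | p.1 z ≤ α - ε ∧ α - ε ≤ p.2 z} ∪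
                ({p : Bx d | p.1 z ≤ α ∧ α ≤ p.2 z} ∪ (GbtL ε ∪ Gbt ε₀))) := by
            rintro p ⟨hpG, hp2⟩
            rcases lt_or_ge (p.2 z) (α - ε) with h | h
            · exact Or.inl ⟨hpG, h⟩
            rcases le_or_gt (p.1 z) (α - ε) with h2 | h2
            · exact Or.inr (Or.inl ⟨h2, h⟩)
            rcases le_or_gt (p.1 z) α with h3 | h3
            · rcases le_or_gt α (p.2 z) with h4 | h4
              · exact Or.inr (Or.inr (Or.inl ⟨h3, h4⟩))
              · exact Or.inr (Or.inr (Or.inr (Or.inl ⟨hpG, h2, h4⟩)))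
            · exact Or.inr (Or.inr (Or.inr (Or.inr ⟨hpG, h3, hp2⟩)))
          exact fp_mono hsub
            (fp_union (hmemX _ (by linarith))
              (fp_union (fp_pin hz _) (fp_union (fp_pin hz _) (fp_union hfpL hfpε₀))))
        refine ⟨fun m => GbtL (1 / (m + 1)), ?_, fun m => Set.sep_subset _ _, ?_, ?_⟩
        · intro m m' hmm p hp
          refine ⟨hp.1, lt_of_le_of_lt ?_ hp.2.1, hp.2.2⟩
          have : (1 : ℝ) / (m' + 1) ≤ 1 / (m + 1) := by
            apply one_div_le_one_div_of_le
            · positivity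
            · have : (m : ℝ) ≤ m' := by exact_mod_cast hmm
              linarith
          linarith
        · intro m; exact key _ (by positivity)
        · intro m p hp
          obtain ⟨m', hm'⟩ := exists_nat_one_div_lt (show (0:ℝ) < α - p.2 z by linarith [hp.2.2])
          refine ⟨m', fun m'' hm'' q hq hiv => ?_⟩
          have h1 : (1 : ℝ) / (m'' + 1) ≤ 1 / (m' + 1) := by
            apply one_div_le_one_div_of_le
            · positivity
            · have : (m' : ℝ) ≤ m'' := by exact_mod_cast hm''
              linarith
          have : p.2 z < q.1 z := by
            have := hq.2.1; linarith
          exact absurd hiv.2 (not_le.2 this)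

/-- master recursion statement -/
def MLstmt (C : Finset (Fin d)) : Prop :=
  ∀ (Fam : ℕ → Set (Bx d)), (∀ m, ¬ fp C (Fam m)) → ∀ (φ : ℕ → Bx d → ℕ),
    ∃ (n : ℕ → ℕ) (B : ℕ → Bx d), StrictMono n ∧ (∀ t, B t ∈ Fam (n t)) ∧
      (∀ t, φ (n t) (B t) ≤ n (t + 1)) ∧
      ∀ t t', t < t' → ¬ lkd C (B t) (B t')

/-- step lemma statement -/
def SLstmt (C : Finset (Fin d)) : Prop :=
  ∀ (G : Set (Bx d)), ¬ fp C G → ∀ (S : Set ℕ), S.Infinite →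
    ∀ (Fam : ℕ → Set (Bx d)), (∀ m ∈ S, ¬ fp C (Fam m)) →
      ∃ J ∈ G, {m ∈ S | ¬ fp C {p ∈ Fam m | ¬ lkd C p J}}.Infinite

/-- Lemma 2: every non-pierceable family contains arbitrarily many pairwise
strongly disjoint boxes. -/
lemma two {C : Finset (Fin d)} {z : Fin d} (hz : z ∈ C) (hml : MLstmt (C.erase z))
    (G : Set (Bx d)) (hG : ¬ fp C G) (r : ℕ) :
    ∃ J : Fin r → Bx d, (∀ t, J t ∈ G) ∧ ∀ t t', t ≠ t' → ¬ lkd C (J t) (J t') := by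
  classical
  obtain ⟨V, hmono, hsubG, hnf, hsep⟩ := conc hz G hG
  have hnf' : ∀ m, ¬ fp (C.erase z) (V m) := by
    intro m hfp
    obtain ⟨H, hH, hp⟩ := hfp
    exact hnf m ⟨H, fun h hh => Finset.mem_of_mem_erase (hH h hh), hp⟩
  set φ : ℕ → Bx d → ℕ := fun _ p =>
    if h : ∃ m', ∀ m'', m' ≤ m'' → ∀ q ∈ V m'', ¬ ivO p q z then h.choose else 0 with hφ
  obtain ⟨n, B, hn, hB, hth, hpair⟩ := hml V hnf' φ
  have hzdisj : ∀ t t', t < t' → ¬ ivO (B t) (B t') z := by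
    intro t t' htt'
    have hBt : B t ∈ V (n t) := hB t
    have hex : ∃ m', ∀ m'', m' ≤ m'' → ∀ q ∈ V m'', ¬ ivO (B t) q z := hsep (n t) (B t) hBt
    have hφeq : φ (n t) (B t) = hex.choose := by rw [hφ]; simp only [dif_pos hex]
    have hnt' : hex.choose ≤ n t' := by
      calc hex.choose = φ (n t) (B t) := hφeq.symm
        _ ≤ n (t + 1) := hth t
        _ ≤ n t' := hn.le_iff_le.2 htt'
    exact hex.choose_spec (n t') hnt' (B t') (hB t')
  refine ⟨fun t => B t, fun t => hsubG _ (hB t), ?_⟩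
  intro t t' htt' hlk
  obtain ⟨i, hiC, hiv⟩ := hlk
  rcases Ne.lt_or_gt htt' with h | h
  · by_cases hiz : i = z
    · exact hzdisj t t' h (hiz ▸ hiv)
    · exact hpair t t' h ⟨i, Finset.mem_erase.2 ⟨hiz, hiC⟩, hiv⟩
  · by_cases hiz : i = z
    · exact hzdisj t' t h (ivO_symm (hiz ▸ hiv))
    · exact hpair t' t h ⟨i, Finset.mem_erase.2 ⟨hiz, hiC⟩, ivO_symm hiv⟩

/-- infinite set of naturals has an element above any bound -/
lemma inf_gt {S : Set ℕ} (h : S.Infinite) (a : ℕ) : ∃ m ∈ S, a < m := by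
  by_contra h'
  push_neg at h'
  exact h (Set.Finite.subset (Set.finite_Iic a) h')

/-- step lemma, empty coordinate set -/
lemma sl_empty : SLstmt (∅ : Finset (Fin d)) := by
  intro G hG S hS Fam hFam
  have hne : G.Nonempty := by
    rcases Set.eq_empty_or_nonempty G with rfl | h
    · exact absurd (fp_empty _) hG
    · exact h
  obtain ⟨J, hJ⟩ := hne
  refine ⟨J, hJ, ?_⟩
  have : {m ∈ S | ¬ fp (∅ : Finset (Fin d)) {p ∈ Fam m | ¬ lkd ∅ p J}} = S := by
    ext m
    simp only [Set.mem_setOf_eq, and_iff_left_iff_imp]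
    intro hm
    have : {p ∈ Fam m | ¬ lkd (∅ : Finset (Fin d)) p J} = Fam m := by
      ext p
      simp [lkd]
    rw [this]
    exact hFam m hm
  rw [this]; exact hS

/-- step lemma from Lemma 2 -/
lemma sl {C : Finset (Fin d)} {z : Fin d} (hz : z ∈ C) (hml : MLstmt (C.erase z)) :
    SLstmt C := by
  classical
  intro G hG S hS Fam hFam
  obtain ⟨J, hJG, hJd⟩ := two hz hml G hG (C.card + 1)
  have hone : ∀ m, m ∈ S → ∃ t, ¬ fp C {p ∈ Fam m | ¬ lkd C p (J t)} :=
    fun m hm => one J hJd (Fam m) (hFam m hm)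
  set κ : ℕ → Fin (C.card + 1) := fun m => if h : m ∈ S then (hone m h).choose else 0 with hκ
  have hex : ∃ t, {m ∈ S | κ m = t}.Infinite := by
    by_contra hco
    push_neg at hco
    have : S ⊆ ⋃ t : Fin (C.card + 1), {m ∈ S | κ m = t} := by
      intro m hm; exact Set.mem_iUnion.2 ⟨κ m, hm, rfl⟩
    exact hS (Set.Finite.subset (Set.finite_iUnion hco) this)
  obtain ⟨t, ht⟩ := hex
  refine ⟨J t, hJG t, ?_⟩
  apply ht.mono
  rintro m ⟨hm, hκm⟩
  refine ⟨hm, ?_⟩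
  have := (hone m hm).choose_spec
  rw [show (hone m hm).choose = κ m by rw [hκ]; simp [dif_pos hm]] at this
  rw [hκm] at this
  exact this

/-- master recursion: from the step lemma to the selection theorem -/
lemma master {C : Finset (Fin d)} (hsl : SLstmt C) : MLstmt C := by
  classical
  intro Fam hFam φ
  set Res : List (Bx d) → ℕ → Set (Bx d) :=
    fun l m => {p ∈ Fam m | ∀ q ∈ l, ¬ lkd C p q} with hRes
  set ψ : ℕ × List (Bx d) × Set ℕ → ℕ := fun st => match st.2.1 with
    | [] => 0
    | q :: _ => φ st.1 q
  set Good : ℕ × List (Bx d) × Set ℕ → Prop := fun st =>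
    st.2.2.Infinite ∧ (∀ m ∈ st.2.2, st.1 < m) ∧ ∀ m ∈ st.2.2, ¬ fp C (Res st.2.1 m)
    with hGood
  have hstep : ∀ st, Good st → ∃ st', Good st' ∧ st.1 < st'.1 ∧
      ψ st ≤ st'.1 ∧ ∃ Jx, Jx ∈ Res st.2.1 st'.1 ∧ st'.2.1 = Jx :: st.2.1 := by
    rintro ⟨nn, l, S⟩ ⟨hSinf, hSgt, hSnf⟩
    obtain ⟨mstar, hmS, hmgt⟩ := inf_gt hSinf (max nn (ψ (nn, l, S)))
    have hS' : {m ∈ S | mstar < m}.Infinite := by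
      have : {m ∈ S | mstar < m} = S \ Set.Iic mstar := by
        ext m; simp [Set.mem_diff, not_le, and_comm]
      rw [this]
      exact hSinf.diff (Set.finite_Iic mstar)
    obtain ⟨J, hJG, hT⟩ := hsl (Res l mstar) (hSnf mstar hmS) {m ∈ S | mstar < m} hS'
      (fun m => Res l m) (fun m hm => hSnf m hm.1)
    refine ⟨(mstar, J :: l, {m ∈ {m ∈ S | mstar < m} |
      ¬ fp C {p ∈ Res l m | ¬ lkd C p J}}), ⟨hT, ?_, ?_⟩, ?_, ?_, J, hJG, rfl⟩
    · rintro m ⟨⟨_, hm2⟩, _⟩; exact hm2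
    · rintro m ⟨⟨hm1, _⟩, hm3⟩
      have : Res (J :: l) m = {p ∈ Res l m | ¬ lkd C p J} := by
        ext p
        simp only [hRes, Set.mem_setOf_eq, List.mem_cons]
        constructor
        · rintro ⟨h1, h2⟩
          exact ⟨⟨h1, fun q hq => h2 q (Or.inr hq)⟩, h2 J (Or.inl rfl)⟩
        · rintro ⟨⟨h1, h2⟩, h3⟩
          refine ⟨h1, fun q hq => ?_⟩
          rcases hq with rfl | hq
          · exact h3
          · exact h2 q hq
      rw [this]; exact hm3
    · exact lt_of_le_of_lt (le_max_left _ _) hmgt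
    · exact le_of_lt (lt_of_le_of_lt (le_max_right _ _) hmgt)
  have hinit : Good (0, [], {m | 0 < m}) := by
    refine ⟨?_, fun m hm => hm, fun m _ => ?_⟩
    · have : {m : ℕ | 0 < m} = Set.Ioi 0 := rfl
      rw [this]; exact Set.Ioi_infinite 0
    · have : Res [] m = Fam m := by ext p; simp [hRes]
      rw [this]; exact hFam m
  set Chain : ℕ → {st // Good st} := fun t => Nat.rec ⟨(0, [], {m | 0 < m}), hinit⟩
      (fun _ ih => ⟨(hstep ih.1 ih.2).choose, (hstep ih.1 ih.2).choose_spec.1⟩) t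
    with hChain
  have hrel : ∀ t, (Chain t).1.1 < (Chain (t+1)).1.1 ∧
      ψ (Chain t).1 ≤ (Chain (t+1)).1.1 ∧
      ∃ Jx, Jx ∈ Res (Chain t).1.2.1 (Chain (t+1)).1.1 ∧
        (Chain (t+1)).1.2.1 = Jx :: (Chain t).1.2.1 := by
    intro t
    exact (hstep (Chain t).1 (Chain t).2).choose_spec.2
  set N : ℕ → ℕ := fun t => (Chain (t+1)).1.1 with hN
  set Bk : ℕ → Bx d := fun t => ((hrel t).2.2).choose with hBkdef
  have hBkRes : ∀ t, Bk t ∈ Res (Chain t).1.2.1 (N t) := fun t => ((hrel t).2.2).choose_spec.1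
  have hlist : ∀ t, (Chain (t+1)).1.2.1 = Bk t :: (Chain t).1.2.1 :=
    fun t => ((hrel t).2.2).choose_spec.2
  have hmem : ∀ t u, u ≤ t → Bk u ∈ (Chain (t+1)).1.2.1 := by
    intro t
    induction t with
    | zero => intro u hu; interval_cases u; rw [hlist 0]; exact List.mem_cons_self
    | succ s ih =>
      intro u hu
      rw [hlist (s+1)]
      rcases Nat.eq_or_lt_of_le hu with rfl | hu'
      · exact List.mem_cons_self
      · exact List.mem_cons_of_mem _ (ih u (Nat.lt_succ_iff.1 hu'))
  refine ⟨N, Bk, ?_, ?_, ?_, ?_⟩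
  · exact strictMono_nat_of_lt_succ (fun t => (hrel (t+1)).1)
  · exact fun t => (hBkRes t).1
  · intro t
    have h2 : ψ ((Chain (t+1)).1.1, (Chain (t+1)).1.2.1, (Chain (t+1)).1.2.2) ≤ N (t+1) :=
      (hrel (t+1)).2.1
    rw [hlist t] at h2
    exact h2
  · intro t t' htt'
    intro hlk
    obtain ⟨s, rfl⟩ : ∃ s, t' = s + 1 :=
      Nat.exists_eq_succ_of_ne_zero (Nat.ne_zero_of_lt htt')
    have hBt' := hBkRes (s+1)
    have hBtmem : Bk t ∈ (Chain (s+1)).1.2.1 := hmem s t (Nat.lt_succ_iff.1 htt')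
    exact (hBt'.2 (Bk t) hBtmem) (lkd_symm hlk)

theorem MLall : ∀ C : Finset (Fin d), MLstmt C := by
  intro C
  induction C using Finset.strongInduction with
  | _ C IH =>
    rcases Finset.eq_empty_or_nonempty C with rfl | ⟨z, hz⟩
    · exact master sl_empty
    · exact master (sl hz (IH (C.erase z) (Finset.erase_ssubset hz)))

set_option maxHeartbeats 4000000 in
lemma reduction {d k : ℕ} (hk : k < d) (Fn : Set (Set (Fin d → ℝ)))
    (hbox : ∀ B ∈ Fn, ∃ a b : Fin d → ℝ, (∀ i, a i ≤ b i) ∧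
      B = {x | ∀ i, x i ∈ Set.Icc (a i) (b i)})
    (hnp : ¬ (∃ K : Finset (Set (Fin d → ℝ)),
      (∀ f ∈ K, ∃ (I : Finset (Fin d)) (c : Fin d → ℝ), I.card = d - k ∧
        f = {x | ∀ i ∈ I, x i = c i}) ∧
      ∀ B ∈ Fn, ∃ f ∈ K, (B ∩ f).Nonempty)) :
    ∃ W : Finset (Fin d), W.card = k + 1 ∧
      ¬ fp W {p : Bx d | (∀ i, p.1 i ≤ p.2 i) ∧
        {x | ∀ i, x i ∈ Set.Icc (p.1 i) (p.2 i)} ∈ Fn} := by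
  classical
  set Pn : Set (Bx d) := {p : Bx d | (∀ i, p.1 i ≤ p.2 i) ∧
    {x | ∀ i, x i ∈ Set.Icc (p.1 i) (p.2 i)} ∈ Fn} with hPn
  by_contra hcon
  push_neg at hcon
  have hfp : ∀ W : Finset (Fin d), W.card = k + 1 → fp W Pn := by
    intro W hW
    by_contra h
    exact h (hcon W hW)
  apply hnp
  set 𝒲 : Finset (Finset (Fin d)) := Finset.univ.powersetCard (k+1) with h𝒲
  set g : Finset (Fin d) → Finset (Fin d × ℝ) := fun W =>
    if h : fp W Pn then h.choose else ∅ with hg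
  have hgspec : ∀ W, fp W Pn → (∀ h ∈ g W, h.1 ∈ W) ∧
      (∀ p ∈ Pn, ∃ h ∈ g W, p.1 h.1 ≤ h.2 ∧ h.2 ≤ p.2 h.1) := by
    intro W h
    rw [hg]; simp only [dif_pos h]
    exact h.choose_spec
  set 𝒱 : Finset (Fin d × ℝ) := 𝒲.biUnion g with h𝒱
  set Vi : Fin d → Finset ℝ := fun i => (𝒱.filter (fun h => h.1 = i)).image Prod.snd with hVi
  set 𝒞 : Finset (Fin d → ℝ) := Fintype.piFinset (fun i => insert (0:ℝ) (Vi i)) with h𝒞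
  refine ⟨((Finset.univ.powersetCard (d - k)) ×ˢ 𝒞).image
    (fun q => {x | ∀ i ∈ q.1, x i = q.2 i}), ?_, ?_⟩
  · intro f hf
    obtain ⟨q, hq, rfl⟩ := Finset.mem_image.1 hf
    obtain ⟨hq1, _⟩ := Finset.mem_product.1 hq
    exact ⟨q.1, q.2, (Finset.mem_powersetCard.1 hq1).2, rfl⟩
  · intro B hB
    obtain ⟨a, b, hab, rfl⟩ := hbox B hB
    have hpPn : ((a, b) : Bx d) ∈ Pn := ⟨hab, hB⟩
    set D : Finset (Fin d) :=
      Finset.univ.filter (fun i => ∃ c ∈ Vi i, a i ≤ c ∧ c ≤ b i) with hD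
    have hDc : (Finset.univ \ D).card ≤ k := by
      by_contra hgt
      push_neg at hgt
      obtain ⟨W, hWsub, hWcard⟩ := Finset.exists_subset_card_eq hgt
      have hW𝒲 : W ∈ 𝒲 := by
        rw [h𝒲, Finset.mem_powersetCard]
        exact ⟨Finset.subset_univ _, hWcard⟩
      obtain ⟨hax, hpin⟩ := hgspec W (hfp W hWcard)
      obtain ⟨h, hhg, hh1, hh2⟩ := hpin _ hpPn
      have hhD : h.1 ∈ D := by
        rw [hD, Finset.mem_filter]
        refine ⟨Finset.mem_univ _, h.2, ?_, hh1, hh2⟩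
        rw [hVi]
        exact Finset.mem_image.2 ⟨h, Finset.mem_filter.2
          ⟨Finset.mem_biUnion.2 ⟨W, hW𝒲, hhg⟩, rfl⟩, rfl⟩
      have := hWsub (hax h hhg)
      rw [Finset.mem_sdiff] at this
      exact this.2 hhD
    have hDcard : d - k ≤ D.card := by
      have h1 : (Finset.univ \ D).card = d - D.card := by
        rw [Finset.card_sdiff_of_subset (Finset.subset_univ _)]
        simp
      have h2 : D.card ≤ d := by
        have := Finset.card_le_univ D
        simpa using this
      omega
    obtain ⟨I, hIsub, hIcard⟩ := Finset.exists_subset_card_eq hDcard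
    set c : Fin d → ℝ := fun i =>
      if h : ∃ c ∈ Vi i, a i ≤ c ∧ c ≤ b i then h.choose else 0 with hc
    have hc𝒞 : c ∈ 𝒞 := by
      rw [h𝒞, Fintype.mem_piFinset]
      intro i
      rw [hc]
      by_cases h : ∃ c ∈ Vi i, a i ≤ c ∧ c ≤ b i
      · simp only [dif_pos h]
        exact Finset.mem_insert_of_mem h.choose_spec.1
      · simp only [dif_neg h]
        exact Finset.mem_insert_self _ _
    have hcI : ∀ i ∈ I, a i ≤ c i ∧ c i ≤ b i := by
      intro i hi
      have hiD := hIsub hi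
      rw [hD, Finset.mem_filter] at hiD
      have hex : ∃ c ∈ Vi i, a i ≤ c ∧ c ≤ b i := hiD.2
      rw [hc]
      simp only [dif_pos hex]
      exact hex.choose_spec.2
    refine ⟨{x | ∀ i ∈ I, x i = c i}, ?_, ?_⟩
    · refine Finset.mem_image.2 ⟨(I, c), Finset.mem_product.2 ⟨?_, hc𝒞⟩, rfl⟩
      rw [Finset.mem_powersetCard]
      exact ⟨Finset.subset_univ _, hIcard⟩
    · refine ⟨fun i => if i ∈ I then c i else a i, ?_, ?_⟩
      · intro i
        by_cases h : i ∈ I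
        · simp only [if_pos h]
          exact ⟨(hcI i h).1, (hcI i h).2⟩
        · simp only [if_neg h]
          exact ⟨le_refl _, hab i⟩
      · intro i hi
        simp only [if_pos hi]

end StmtAux

theorem stmt16 (d k : ℕ) (hk : k < d)
    (F : ℕ → Set (Set (Fin d → ℝ)))
    (hbox : ∀ n, ∀ B ∈ F n, IsBox B)
    (hnp : ∀ n, ¬ PiercedByFlats k (F n)) :
    ∃ (n : ℕ → ℕ) (B : ℕ → Set (Fin d → ℝ)),
      StrictMono n ∧ (∀ m, B m ∈ F (n m)) ∧
      ∀ m m' : ℕ, m ≠ m' → ∀ K, IsAxisFlat k K →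
        ¬ ((K ∩ B m).Nonempty ∧ (K ∩ B m').Nonempty) := by
  classical
  have hred : ∀ n, ∃ W : Finset (Fin d), W.card = k + 1 ∧
      ¬ StmtAux.fp W {p : StmtAux.Bx d | (∀ i, p.1 i ≤ p.2 i) ∧
        {x | ∀ i, x i ∈ Set.Icc (p.1 i) (p.2 i)} ∈ F n} := by
    intro n
    exact StmtAux.reduction hk (F n) (hbox n) (hnp n)
  choose Wsel hWcard hWnf using hred
  have hfib : ∃ W : Finset (Fin d), {n | Wsel n = W}.Infinite := by
    by_contra h
    push_neg at h
    have hsub : (Set.univ : Set ℕ) ⊆ ⋃ W : Finset (Fin d), {n | Wsel n = W} :=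
      fun n _ => Set.mem_iUnion.2 ⟨Wsel n, rfl⟩
    exact Set.infinite_univ (Set.Finite.subset (Set.finite_iUnion h) hsub)
  obtain ⟨W, hT⟩ := hfib
  have hTcard : W.card = k + 1 := by
    obtain ⟨n, hn⟩ := hT.nonempty
    rw [← hn]
    exact hWcard n
  have hT' : (setOf (fun n => Wsel n = W)).Infinite := hT
  set ν : ℕ → ℕ := Nat.nth (fun n => Wsel n = W) with hν
  have hνmem : ∀ m, Wsel (ν m) = W := fun m => Nat.nth_mem_of_infinite hT' m
  set Fam : ℕ → Set (StmtAux.Bx d) := fun m => {p : StmtAux.Bx d | (∀ i, p.1 i ≤ p.2 i) ∧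
    {x | ∀ i, x i ∈ Set.Icc (p.1 i) (p.2 i)} ∈ F (ν m)} with hFamdef
  have hFam : ∀ m, ¬ StmtAux.fp W (Fam m) := by
    intro m
    have h := hWnf (ν m)
    rw [hνmem m] at h
    exact h
  obtain ⟨n', Bk, hn'mono, hBkmem, _, hpair⟩ := StmtAux.MLall W Fam hFam (fun _ _ => 0)
  refine ⟨fun m => ν (n' m),
    fun m => {x | ∀ i, x i ∈ Set.Icc ((Bk m).1 i) ((Bk m).2 i)}, ?_, ?_, ?_⟩
  · exact (Nat.nth_strictMono hT').comp hn'mono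
  · intro m
    exact (hBkmem m).2
  · rintro m m' hne K hK ⟨⟨x, hxK, hxB⟩, y, hyK, hyB⟩
    obtain ⟨I, cf, hIcard, rfl⟩ := hK
    have hIW : (I ∩ W).Nonempty := by
      by_contra hemp
      rw [Finset.not_nonempty_iff_eq_empty] at hemp
      have hdsj : Disjoint I W := Finset.disjoint_iff_inter_eq_empty.2 hemp
      have hcard := Finset.card_union_of_disjoint hdsj
      have hle : (I ∪ W).card ≤ d := by
        have := Finset.card_le_univ (I ∪ W)
        simpa using this
      omega
    obtain ⟨i₀, hi₀⟩ := hIW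
    rw [Finset.mem_inter] at hi₀
    have hx0 : cf i₀ ∈ Set.Icc ((Bk m).1 i₀) ((Bk m).2 i₀) := by
      have h1 := hxK i₀ hi₀.1
      have h2 := hxB i₀
      rwa [h1] at h2
    have hy0 : cf i₀ ∈ Set.Icc ((Bk m').1 i₀) ((Bk m').2 i₀) := by
      have h1 := hyK i₀ hi₀.1
      have h2 := hyB i₀
      rwa [h1] at h2
    have hlkd : StmtAux.lkd W (Bk m) (Bk m') :=
      ⟨i₀, hi₀.2, le_trans hx0.1 hy0.2, le_trans hy0.1 hx0.2⟩
    rcases hne.lt_or_gt with h | h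
    · exact hpair m m' h hlkd
    · exact hpair m' m h (StmtAux.lkd_symm hlkd)
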